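/- Assume P is eventually positive and has SRLP with ratio-limit kernel H. Then the ratio-limit radical R_μ := {y ∈ G : H(x,y) = H(x,e) for all x ∈ G} is a subgroup of G: it contains e, and for all y, z ∈ R_μ one has y·z ∈ R_μ and y⁻¹ ∈ R_μ. -/

import Mathlib

open Filter Topology
open scoped Classical

/-- The ratio-limit radical of the ratio-limit kernel H. -/
def ratioLimitRadical {G : Type*} [Group G] (H : G → G → ℝ) : Set G :=
  {y : G | ∀ x : G, H x y = H x 1}

/-- the ratio-limit radical is a subgroup of G. -/
theorem stmt4 {G : Type*} [Group G] [Countable G]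
(μ : G → ℝ) (hμnn : ∀ g : G, 0 ≤ μ g)
    (hμfin : (Function.support μ).Finite)
    (hμgen : Subsemigroup.closure (Function.support μ) = ⊤)
    (hμsum : ∑ᶠ g : G, μ g = 1)
    (ν : ℕ → G → ℝ)
    (hν0 : ∀ x : G, ν 0 x = if x = 1 then 1 else 0)
    (hνs : ∀ (m : ℕ) (x : G), ν (m + 1) x = ∑ᶠ g : G, ν m g * μ (g⁻¹ * x))
(hev : ∀ y : G, ∃ m₀ : ℕ, ∀ m ≥ m₀, 0 < ν m y)
(H : G → G → ℝ)
    (hH : ∀ x y : G, Tendsto (fun m : ℕ => ν m (x⁻¹ * y) / ν m y) atTop (𝓝 (H x y)))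
    (hHpos : ∀ x y : G, 0 < H x y) :
    (1 : G) ∈ ratioLimitRadical H ∧
      ∀ y z : G, y ∈ ratioLimitRadical H → z ∈ ratioLimitRadical H →
        y * z ∈ ratioLimitRadical H ∧ y⁻¹ ∈ ratioLimitRadical H := by
  set F : G → ℝ := fun a => H a⁻¹ 1 with hFdef
  have hFpos : ∀ a : G, 0 < F a := fun a => hHpos _ _
  have hFlim : ∀ a : G, Tendsto (fun m => ν m a / ν m 1) atTop (𝓝 (F a)) := by
    intro a
    simpa using hH a⁻¹ 1
  -- F 1 = 1
  have hF1 : F 1 = 1 := by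
    have h1 : Tendsto (fun m => ν m (1 : G) / ν m 1) atTop (𝓝 1) := by
      obtain ⟨m₀, hm₀⟩ := hev 1
      apply Tendsto.congr' _ tendsto_const_nhds
      filter_upwards [eventually_ge_atTop m₀] with m hm
      exact (div_self (hm₀ m hm).ne').symm
    exact tendsto_nhds_unique (hFlim 1) h1
  -- key identity: H x y = F (x⁻¹ y) / F y
  have hkey : ∀ x y : G, H x y = F (x⁻¹ * y) / F y := by
    intro x y
    have h2 : Tendsto (fun m => (ν m (x⁻¹ * y) / ν m 1) / (ν m y / ν m 1)) atTop
        (𝓝 (F (x⁻¹ * y) / F y)) := (hFlim _).div (hFlim y) (hFpos y).ne'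
    refine tendsto_nhds_unique (hH x y) (h2.congr' ?_)
    obtain ⟨m₀, hm₀⟩ := hev 1
    obtain ⟨m₁, hm₁⟩ := hev y
    filter_upwards [eventually_ge_atTop m₀, eventually_ge_atTop m₁] with m hm hm'
    have h1 : ν m 1 ≠ 0 := (hm₀ m hm).ne'
    have h2 : ν m y ≠ 0 := (hm₁ m hm').ne'
    field_simp
  -- membership in the radical is multiplicativity of F
  have hmem : ∀ y : G, y ∈ ratioLimitRadical H ↔ ∀ a : G, F (a * y) = F a * F y := by
    intro y
    constructor
    · intro hy a
      have := hy a⁻¹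
      rw [hkey, hkey] at this
      simp only [inv_inv, mul_one, hF1, div_one] at this
      rw [div_eq_iff (hFpos y).ne'] at this
      exact this
    · intro h x
      rw [hkey, hkey]
      simp only [mul_one, hF1, div_one]
      rw [div_eq_iff (hFpos y).ne']
      exact h x⁻¹
  refine ⟨?_, ?_⟩
  · rw [hmem]
    intro a; rw [mul_one, hF1, mul_one]
  · intro y z hy hz
    rw [hmem] at hy hz
    have hFy : F y ≠ 0 := (hFpos y).ne'
    constructor
    · rw [hmem]
      intro a
      rw [← mul_assoc, hz (a * y), hy a, hz y, mul_assoc]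
    · rw [hmem]
      intro a
      have h1 : F (a * y⁻¹ * y) = F (a * y⁻¹) * F y := hy _
      have h2 : F y⁻¹ * F y = 1 := by
        have := hy y⁻¹
        rw [inv_mul_cancel, hF1] at this
        linarith [this]
      have h3 : a * y⁻¹ * y = a := by group
      rw [h3] at h1
      have : F (a * y⁻¹) = F a / F y := by
        field_simp [h1]
        exact h1.symm
      rw [this]
      have h4 : F y⁻¹ = 1 / F y := by
        rw [eq_div_iff hFy]; exact h2
      rw [h4, div_eq_mul_one_div]
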